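/- Let N be a self-adjoint linear subspace of the trace-zero matrices inside M_n(ℂ) (i.e., X ∈ N implies X* ∈ N and tr(X) = 0). Then there exists an entanglement breaking quantum channel Φ : M_n(ℂ) → M_n(ℂ) whose nullspace is exactly N: Φ(X) = 0 if and only if X ∈ N. -/

import Mathlib

open Matrix ComplexOrder

namespace EBAux

variable {n : ℕ}

noncomputable def psi (n : ℕ) :
    Matrix (Fin n) (Fin n) ℂ →ₗ[ℂ] Module.Dual ℂ (Matrix (Fin n) (Fin n) ℂ) :=
  (LinearMap.mul ℂ (Matrix (Fin n) (Fin n) ℂ)).compr₂ (Matrix.traceLinearMap (Fin n) ℂ ℂ)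

@[simp] lemma psi_apply (A X : Matrix (Fin n) (Fin n) ℂ) : psi n A X = (A * X).trace := rfl

lemma eq_zero_of_forall_trace_mul (A : Matrix (Fin n) (Fin n) ℂ)
    (h : ∀ X, (A * X).trace = 0) : A = 0 := by
  ext i j
  have h1 := h (single j i 1)
  rw [Matrix.trace] at h1
  have hd : ∀ a, (A * single j i 1).diag a = if a = i then A a j else 0 := by
    intro a
    by_cases ha : a = i
    · subst ha; simp [Matrix.diag]
    · rw [if_neg ha]
      exact Matrix.mul_single_apply_of_ne (c := (1 : ℂ)) j i a a ha A
  rw [Finset.sum_congr rfl (fun a _ => hd a)] at h1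
  simpa using h1

lemma psi_injective : Function.Injective (psi n) := by
  rw [injective_iff_map_eq_zero]
  intro A hA
  exact eq_zero_of_forall_trace_mul A fun X => by
    simpa using LinearMap.congr_fun hA X

lemma psi_surjective : Function.Surjective (psi n) :=
  (LinearMap.injective_iff_surjective_of_finrank_eq_finrank
    (Subspace.dual_finrank_eq (K := ℂ) (V := Matrix (Fin n) (Fin n) ℂ)).symm).mp psi_injective

/-- Finite-dimensional duality for the trace pairing. -/
lemma mem_of_forall_trace_eq_zero (N : Submodule ℂ (Matrix (Fin n) (Fin n) ℂ))
    (X : Matrix (Fin n) (Fin n) ℂ)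
    (h : ∀ A, (∀ Y ∈ N, (A * Y).trace = 0) → (A * X).trace = 0) : X ∈ N := by
  rw [← Subspace.forall_mem_dualAnnihilator_apply_eq_zero_iff N X]
  intro φ hφ
  obtain ⟨A, rfl⟩ := psi_surjective φ
  exact h A fun Y hY => by simpa using (Submodule.mem_dualAnnihilator _).mp hφ Y hY

noncomputable def bnd (M : Matrix (Fin n) (Fin n) ℂ) : ℝ :=
  ∑ i, ∑ j, ‖M i j‖

lemma bnd_nonneg (M : Matrix (Fin n) (Fin n) ℂ) : 0 ≤ bnd M :=
  Finset.sum_nonneg fun _ _ => Finset.sum_nonneg fun _ _ => norm_nonneg _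

lemma star_quadform {H : Matrix (Fin n) (Fin n) ℂ} (hH : H.IsHermitian) (x : Fin n → ℂ) :
    star (star x ⬝ᵥ H *ᵥ x) = star x ⬝ᵥ H *ᵥ x := by
  conv_rhs => rw [star_dotProduct]
  rw [star_mulVec, ← dotProduct_mulVec, hH.eq]

lemma quadform_abs_le (M : Matrix (Fin n) (Fin n) ℂ) (x : Fin n → ℂ) :
    ‖star x ⬝ᵥ M *ᵥ x‖ ≤ bnd M * ∑ i, Complex.normSq (x i) := by
  set s := ∑ i, Complex.normSq (x i) with hs
  have hsq : ∀ i, Complex.normSq (x i) ≤ s := fun i =>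
    Finset.single_le_sum (fun j _ => Complex.normSq_nonneg (x j)) (Finset.mem_univ i)
  have hab : ∀ i j, ‖x i‖ * ‖x j‖ ≤ s := by
    intro i j
    nlinarith [hsq i, hsq j, Complex.sq_norm (x i), Complex.sq_norm (x j),
      sq_nonneg (‖x i‖ - ‖x j‖), norm_nonneg (x i),
      norm_nonneg (x j)]
  calc ‖star x ⬝ᵥ M *ᵥ x‖
      = ‖∑ i, ∑ j, star (x i) * (M i j * x j)‖ := by
        simp [dotProduct, Matrix.mulVec, Finset.mul_sum]
    _ ≤ ∑ i, ∑ j, ‖star (x i) * (M i j * x j)‖ := by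
        refine (norm_sum_le _ _).trans (Finset.sum_le_sum fun i _ => ?_)
        exact norm_sum_le _ _
    _ ≤ ∑ i, ∑ j, ‖M i j‖ * s := by
        refine Finset.sum_le_sum fun i _ => Finset.sum_le_sum fun j _ => ?_
        have he : ‖star (x i) * (M i j * x j)‖
            = ‖M i j‖ * (‖x i‖ * ‖x j‖) := by
          simp only [norm_mul, Complex.star_def, Complex.norm_conj]
          ring
        exact he ▸ mul_le_mul_of_nonneg_left (hab i j) (norm_nonneg _)
    _ = bnd M * s := by rw [bnd, Finset.sum_mul]; simp [Finset.sum_mul]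

lemma dotProduct_star_self_eq (x : Fin n → ℂ) :
    star x ⬝ᵥ x = ((∑ i, Complex.normSq (x i) : ℝ) : ℂ) := by
  rw [dotProduct]
  push_cast
  exact Finset.sum_congr rfl fun i _ => by
    rw [Pi.star_apply, Complex.star_def, mul_comm, Complex.mul_conj]

lemma posdef_trace {M : Matrix (Fin n) (Fin n) ℂ} (hM : M.PosDef) (hn : 0 < n) :
    ∃ r : ℝ, 0 < r ∧ M.trace = (r : ℂ) := by
  have hdiag : ∀ i, 0 < M i i := by
    intro i
    have hx : (Pi.single i 1 : Fin n → ℂ) ≠ 0 := by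
      intro h; simpa using congrFun h i
    have h2 := hM.dotProduct_mulVec_pos hx
    simpa [dotProduct, Matrix.mulVec, Pi.single_apply, Finset.mul_sum] using h2
  have htr : 0 < M.trace := by
    have : Nonempty (Fin n) := Fin.pos_iff_nonempty.mp hn
    exact Finset.sum_pos (fun i _ => hdiag i) Finset.univ_nonempty
  refine ⟨M.trace.re, (Complex.lt_def.mp htr).1, ?_⟩
  apply Complex.ext <;> simp [(Complex.lt_def.mp htr).2.symm]

lemma posdef_ne_zero {M : Matrix (Fin n) (Fin n) ℂ} (hM : M.PosDef) (hn : 0 < n) :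
    M ≠ 0 := by
  intro h
  obtain ⟨r, hr, htr⟩ := posdef_trace hM hn
  rw [h] at htr
  simp at htr
  exact hr.ne' (by exact_mod_cast htr.symm)

lemma posdef_real_smul {M : Matrix (Fin n) (Fin n) ℂ} (hM : M.PosDef) {r : ℝ} (hr : 0 < r) :
    ((r : ℂ) • M).PosDef := by
  refine PosDef.of_dotProduct_mulVec_pos ?_ ?_
  · rw [IsHermitian, conjTranspose_smul, hM.1.eq, Complex.star_def, Complex.conj_ofReal]
  · intro x hx
    rw [smul_mulVec, dotProduct_smul, smul_eq_mul]
    exact mul_pos (by exact_mod_cast hr) (hM.dotProduct_mulVec_pos hx)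

lemma posDef_of_bnd_lt {H : Matrix (Fin n) (Fin n) ℂ} (hH : H.IsHermitian)
    {c : ℝ} (hc : bnd H < c) : (H + (c : ℂ) • 1).PosDef := by
  refine PosDef.of_dotProduct_mulVec_pos ?_ ?_
  · rw [IsHermitian, conjTranspose_add, conjTranspose_smul, conjTranspose_one, hH.eq,
      Complex.star_def, Complex.conj_ofReal]
  · intro x hx
    set s := ∑ i, Complex.normSq (x i) with hsdef
    have hs : 0 < s := by
      obtain ⟨i, hi⟩ := Function.ne_iff.mp hx
      exact Finset.sum_pos' (fun j _ => Complex.normSq_nonneg _)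
        ⟨i, Finset.mem_univ i, Complex.normSq_pos.mpr hi⟩
    have hexp : star x ⬝ᵥ (H + (c : ℂ) • 1) *ᵥ x
        = star x ⬝ᵥ H *ᵥ x + (c : ℂ) * (s : ℂ) := by
      rw [add_mulVec, smul_mulVec, one_mulVec, dotProduct_add, dotProduct_smul,
        dotProduct_star_self_eq, smul_eq_mul]
    set z := star x ⬝ᵥ H *ᵥ x with hz
    have him : z.im = 0 := by
      have h1 := star_quadform hH x
      rw [← hz] at h1
      exact Complex.conj_eq_iff_im.mp h1
    have habs : |z.re| ≤ bnd H * s :=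
      (Complex.abs_re_le_norm z).trans (quadform_abs_le H x)
    rw [hexp, Complex.lt_def]
    constructor
    · have h1 : (z + (c : ℂ) * (s : ℂ)).re = z.re + c * s := by simp
      rw [h1]
      have := abs_le.mp habs
      simp only [Complex.zero_re]
      nlinarith
    · simp [him]

/-- trace of `F * Xᴴ` is the conjugate of the trace of `F * X` for hermitian `F`. -/
lemma trace_mul_conjTranspose_eq {F : Matrix (Fin n) (Fin n) ℂ} (hF : F.IsHermitian)
    (X : Matrix (Fin n) (Fin n) ℂ) : (F * Xᴴ).trace = star ((F * X).trace) := by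
  calc (F * Xᴴ).trace = ((X * Fᴴ)ᴴ).trace := by
        rw [Matrix.conjTranspose_mul, Matrix.conjTranspose_conjTranspose]
    _ = star ((X * Fᴴ).trace) := Matrix.trace_conjTranspose _
    _ = star ((F * X).trace) := by rw [hF.eq, Matrix.trace_mul_comm]

end EBAux

open EBAux

set_option maxHeartbeats 1000000 in
theorem exists_entanglementBreaking_with_nullspace {n : ℕ}
    (N : Submodule ℂ (Matrix (Fin n) (Fin n) ℂ))
    (hsa : ∀ X ∈ N, Xᴴ ∈ N)
    (htr0 : ∀ X ∈ N, X.trace = 0) :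
    ∃ (m : ℕ) (F R : Fin m → Matrix (Fin n) (Fin n) ℂ),
      (∀ k, (F k).PosSemidef) ∧ (∀ k, F k ≠ 0) ∧ (∑ k, F k = 1) ∧
      (∀ k, (R k).PosSemidef) ∧ (∀ k, (R k).trace = 1) ∧
      (∀ X : Matrix (Fin n) (Fin n) ℂ,
        (∑ k, (F k * X).trace • R k = 0) ↔ X ∈ N) := by
  classical
  rcases Nat.eq_zero_or_pos n with hn | hn
  · -- trivial case n = 0
    subst hn
    refine ⟨0, Fin.elim0, Fin.elim0, fun k => k.elim0, fun k => k.elim0, ?_,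
      fun k => k.elim0, fun k => k.elim0, ?_⟩
    · ext i j; exact i.elim0
    · intro X
      simp only [Finset.univ_eq_empty, Finset.sum_empty]
      constructor
      · intro _
        have : X = 0 := by ext i j; exact i.elim0
        rw [this]; exact N.zero_mem
      · intro _; trivial
  -- main case
  set W : Submodule ℂ (Matrix (Fin n) (Fin n) ℂ) := N.dualAnnihilator.comap (psi n) with hW
  have hmemW : ∀ A, A ∈ W ↔ ∀ Y ∈ N, (A * Y).trace = 0 := by
    intro A
    simp [hW, Submodule.mem_comap, Submodule.mem_dualAnnihilator]
  have honeW : (1 : Matrix (Fin n) (Fin n) ℂ) ∈ W :=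
    (hmemW 1).mpr fun Y hY => by rw [one_mul]; exact htr0 Y hY
  have hWsa : ∀ A ∈ W, Aᴴ ∈ W := by
    intro A hA
    rw [hmemW] at hA ⊢
    intro Y hY
    have h1 := hA Yᴴ (hsa Y hY)
    calc (Aᴴ * Y).trace = (Yᴴᴴ * Aᴴ).trace := by
          rw [Matrix.conjTranspose_conjTranspose, Matrix.trace_mul_comm]
      _ = star ((A * Yᴴ).trace) := by
          rw [← Matrix.conjTranspose_mul, Matrix.trace_conjTranspose]
      _ = 0 := by rw [h1, star_zero]
  -- spanning family of W
  obtain ⟨p, G, hGspan⟩ :=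
    Submodule.fg_iff_exists_fin_generating_family.mp (IsNoetherian.noetherian W)
  have hGW : ∀ j, G j ∈ W := fun j => hGspan ▸ Submodule.subset_span ⟨j, rfl⟩
  -- hermitian spanning family, indexed by a sum type
  set K : Fin p ⊕ Fin p → Matrix (Fin n) (Fin n) ℂ :=
    Sum.elim (fun j => (2⁻¹ : ℂ) • (G j + (G j)ᴴ))
      (fun j => (-(Complex.I) * 2⁻¹) • (G j - (G j)ᴴ)) with hKdef
  have hKW : ∀ s, K s ∈ W := by
    rintro (j | j)
    · rw [hKdef, Sum.elim_inl]
      exact W.smul_mem _ (W.add_mem (hGW j) (hWsa _ (hGW j)))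
    · rw [hKdef, Sum.elim_inr]
      exact W.smul_mem _ (W.sub_mem (hGW j) (hWsa _ (hGW j)))
  have hKherm : ∀ s, (K s).IsHermitian := by
    rintro (j | j)
    · rw [hKdef, Sum.elim_inl]
      rw [IsHermitian, conjTranspose_smul, conjTranspose_add,
        conjTranspose_conjTranspose]
      have : star ((2 : ℂ)⁻¹) = (2 : ℂ)⁻¹ := by norm_num
      rw [this, add_comm]
    · rw [hKdef, Sum.elim_inr]
      rw [IsHermitian, conjTranspose_smul, conjTranspose_sub,
        conjTranspose_conjTranspose]
      have h1 : star (-(Complex.I) * 2⁻¹) = Complex.I * 2⁻¹ := by simp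
      have h2 : (G j)ᴴ - G j = -(G j - (G j)ᴴ) := (neg_sub _ _).symm
      rw [h1, h2, smul_neg, ← neg_smul, neg_mul]
  have hGrecover : ∀ j, G j = K (Sum.inl j) + Complex.I • K (Sum.inr j) := by
    intro j
    rw [hKdef]
    simp only [Sum.elim_inl, Sum.elim_inr]
    rw [smul_smul]
    have h1 : Complex.I * (-(Complex.I) * 2⁻¹) = 2⁻¹ := by
      rw [show Complex.I * (-(Complex.I) * 2⁻¹) = -(Complex.I * Complex.I) * 2⁻¹ from by ring,
        Complex.I_mul_I]
      norm_num
    rw [h1]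
    module
  set q := p + p with hq
  set K' : Fin q → Matrix (Fin n) (Fin n) ℂ := fun i => K (finSumFinEquiv.symm i) with hK'
  have hK'W : ∀ i, K' i ∈ W := fun i => hKW _
  have hK'herm : ∀ i, (K' i).IsHermitian := fun i => hKherm _
  have hKK' : ∀ s, K s = K' (finSumFinEquiv s) := by
    intro s
    simp only [hK']
    rw [Equiv.symm_apply_apply]
  -- constants
  set c : Fin q → ℝ := fun i => bnd (K' i) + 1 with hc
  set t : ℝ := (∑ i, c i) + bnd (-∑ i, K' i) + 1 with ht
  have hcsum : 0 ≤ ∑ i, c i :=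
    Finset.sum_nonneg fun i _ => by
      have := bnd_nonneg (K' i); rw [hc]; dsimp only; linarith
  have ht0 : 0 < t := by
    have := bnd_nonneg (-∑ i, K' i); rw [ht]; linarith
  -- the POVM
  set F : Fin (q + 1) → Matrix (Fin n) (Fin n) ℂ :=
    Fin.cons (((t⁻¹ : ℝ) : ℂ) • ((-∑ i, K' i) + ((t - ∑ i, c i : ℝ) : ℂ) • 1))
      (fun i => ((t⁻¹ : ℝ) : ℂ) • (K' i + ((c i : ℝ) : ℂ) • 1)) with hF
  have hFposdef : ∀ k, (F k).PosDef := by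
    refine Fin.cases ?_ ?_
    · rw [hF, Fin.cons_zero]
      refine posdef_real_smul (posDef_of_bnd_lt ?_ ?_) (inv_pos.mpr ht0)
      · rw [IsHermitian, conjTranspose_neg, conjTranspose_sum]
        congr 1
        exact Finset.sum_congr rfl fun i _ => (hK'herm i).eq
      · rw [ht]; linarith
    · intro i
      rw [hF, Fin.cons_succ]
      refine posdef_real_smul (posDef_of_bnd_lt (hK'herm i) ?_) (inv_pos.mpr ht0)
      rw [hc]; dsimp only; linarith
  have htinv : ((t⁻¹ : ℝ) : ℂ) * ((t : ℝ) : ℂ) = 1 := by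
    rw [← Complex.ofReal_mul, inv_mul_cancel₀ ht0.ne']
    norm_num
  have hsum : ∑ k, F k = 1 := by
    rw [hF, Fin.sum_cons]
    have hsumin : ∑ i : Fin q, ((t⁻¹ : ℝ) : ℂ) • (K' i + ((c i : ℝ) : ℂ) • 1)
        = ((t⁻¹ : ℝ) : ℂ) • ((∑ i, K' i) + ((∑ i, c i : ℝ) : ℂ) • 1) := by
      rw [← Finset.smul_sum]
      congr 1
      rw [Finset.sum_add_distrib]
      congr 1
      rw [← Finset.sum_smul]
      congr 1
      push_cast
      rfl
    rw [hsumin, ← smul_add]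
    have : (-∑ i, K' i) + ((t - ∑ i, c i : ℝ) : ℂ) • 1
        + ((∑ i, K' i) + ((∑ i, c i : ℝ) : ℂ) • 1) = ((t : ℝ) : ℂ) • 1 := by
      have hcast : ((t - ∑ i, c i : ℝ) : ℂ) + ((∑ i, c i : ℝ) : ℂ) = ((t : ℝ) : ℂ) := by
        push_cast; ring
      rw [← hcast]
      module
    rw [this, smul_smul, htinv, one_smul]
  have hFW : ∀ k, F k ∈ W := by
    refine Fin.cases ?_ ?_
    · rw [hF, Fin.cons_zero]
      exact W.smul_mem _ (W.add_mem (W.neg_mem (Submodule.sum_mem W fun i _ => hK'W i))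
        (W.smul_mem _ honeW))
    · intro i
      rw [hF, Fin.cons_succ]
      exact W.smul_mem _ (W.add_mem (hK'W i) (W.smul_mem _ honeW))
  -- traces
  choose r hrpos hFtr using fun k => posdef_trace (hFposdef k) hn
  set R : Fin (q + 1) → Matrix (Fin n) (Fin n) ℂ :=
    fun k => (((r k)⁻¹ : ℝ) : ℂ) • F k with hR
  have hRpsd : ∀ k, (R k).PosSemidef := fun k =>
    (posdef_real_smul (hFposdef k) (inv_pos.mpr (hrpos k))).posSemidef
  have hRtr : ∀ k, (R k).trace = 1 := by
    intro k
    rw [hR]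
    dsimp only
    rw [trace_smul, hFtr k, smul_eq_mul, ← Complex.ofReal_mul,
      inv_mul_cancel₀ (hrpos k).ne']
    norm_num
  refine ⟨q + 1, F, R, fun k => (hFposdef k).posSemidef,
    fun k => posdef_ne_zero (hFposdef k) hn, hsum, hRpsd, hRtr, ?_⟩
  intro X
  constructor
  · -- forward: Φ(X) = 0 → X ∈ N
    intro hX
    have key : ∀ k, (F k * X).trace = 0 := by
      have h0 : ((∑ k, (F k * X).trace • R k) * Xᴴ).trace = 0 := by
        rw [hX, zero_mul, trace_zero]
      have hexpand : ((∑ k, (F k * X).trace • R k) * Xᴴ).trace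
          = ((∑ k, (r k)⁻¹ * Complex.normSq ((F k * X).trace) : ℝ) : ℂ) := by
        rw [Finset.sum_mul, trace_sum]
        push_cast
        refine Finset.sum_congr rfl fun k _ => ?_
        rw [hR]
        dsimp only
        rw [smul_smul, smul_mul_assoc, trace_smul, smul_eq_mul,
          trace_mul_conjTranspose_eq (hFposdef k).1 X]
        rw [show ((F k * X).trace * ((((r k)⁻¹ : ℝ) : ℂ))) * star ((F k * X).trace)
            = (((r k)⁻¹ : ℝ) : ℂ) * ((F k * X).trace * star ((F k * X).trace)) from by ring]
        rw [Complex.star_def, Complex.mul_conj]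
        norm_cast
      rw [hexpand] at h0
      have hreal : (∑ k, (r k)⁻¹ * Complex.normSq ((F k * X).trace) : ℝ) = 0 :=
        Complex.ofReal_eq_zero.mp h0
      have hterms := (Finset.sum_eq_zero_iff_of_nonneg fun k _ =>
        mul_nonneg (inv_pos.mpr (hrpos k)).le (Complex.normSq_nonneg _)).mp hreal
      intro k
      have hk := hterms k (Finset.mem_univ k)
      have : Complex.normSq ((F k * X).trace) = 0 := by
        rcases mul_eq_zero.mp hk with h | h
        · exact absurd h (inv_pos.mpr (hrpos k)).ne'
        · exact h
      exact Complex.normSq_eq_zero.mp this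
    apply mem_of_forall_trace_eq_zero N X
    intro A hA
    have hAW : A ∈ W := (hmemW A).mpr hA
    have hone : (1 : Matrix (Fin n) (Fin n) ℂ) ∈ Submodule.span ℂ (Set.range F) := by
      rw [← hsum]
      exact Submodule.sum_mem _ fun k _ => Submodule.subset_span ⟨k, rfl⟩
    have hKmem : ∀ i, K' i ∈ Submodule.span ℂ (Set.range F) := by
      intro i
      have hKi : K' i = ((t : ℝ) : ℂ) • F i.succ - ((c i : ℝ) : ℂ) • 1 := by
        rw [hF]
        rw [Fin.cons_succ, smul_smul, mul_comm, htinv, one_smul, add_sub_cancel_right]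
      rw [hKi]
      exact sub_mem (Submodule.smul_mem _ _ (Submodule.subset_span ⟨i.succ, rfl⟩))
        (Submodule.smul_mem _ _ hone)
    have hsub : W ≤ Submodule.span ℂ (Set.range F) := by
      rw [← hGspan, Submodule.span_le]
      rintro _ ⟨j, rfl⟩
      rw [hGrecover j, hKK' (Sum.inl j), hKK' (Sum.inr j)]
      exact add_mem (hKmem _) (Submodule.smul_mem _ _ (hKmem _))
    have hker : Submodule.span ℂ (Set.range F) ≤
        LinearMap.ker ((Matrix.traceLinearMap (Fin n) ℂ ℂ).comp (LinearMap.mulRight ℂ X)) := by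
      rw [Submodule.span_le]
      rintro _ ⟨k, rfl⟩
      simpa [LinearMap.mem_ker] using key k
    simpa using hker (hsub hAW)
  · -- backward: X ∈ N → Φ(X) = 0
    intro hXN
    refine Finset.sum_eq_zero fun k _ => ?_
    rw [(hmemW _).mp (hFW k) X hXN, zero_smul]
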